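/- Let δ > 0 and let J be any interval of length 1/N^k. If I_1, …, I_r are the open intervals of length exactly δ/N^k deleted in the construction of X_{δ/N^k} (i.e., removed at the stage of the Cantor construction where the removed middle intervals have length δ/N^k), then the number of indices j with I_j ∩ J ≠ ∅ is at most 3 · 2^{log_{2N/(N-1)}⌈1/δ⌉}. -/

import Mathlib

open Set

/-- ratio (N-1)/(2N) of each half of the middle-1/N Cantor construction -/
noncomputable def cantorRatio (N : ℕ) : ℝ := (N - 1) / (2 * N)

/-- k-th stage C_k of the middle 1/N Cantor set -/
noncomputable def cantorStage (N : ℕ) : ℕ → Set ℝ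
  | 0 => Set.Icc 0 1
  | k + 1 => (fun x => cantorRatio N * x) '' cantorStage N k ∪
      (fun x => cantorRatio N * x + (N + 1) / (2 * N)) '' cantorStage N k

/-- the middle 1/N Cantor set -/
noncomputable def middleCantorSet (N : ℕ) : Set ℝ := ⋂ k, cantorStage N k

/-- number of stages whose removed middle intervals have length at least δ -/
noncomputable def numStages (N : ℕ) (δ : ℝ) : ℕ :=
  sSup {j : ℕ | δ ≤ 1 / N * cantorRatio N ^ (j - 1)}

/-- X_δ : perform only the removal steps removing intervals of length ≥ δ -/
noncomputable def cantorApprox (N : ℕ) (δ : ℝ) : Set ℝ := cantorStage N (numStages N δ)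

namespace Stmt4Aux

/-- left endpoint of the stage-`m` interval indexed by the word `w` -/
noncomputable def wpt (N : ℕ) {m : ℕ} (w : Fin m → Bool) : ℝ :=
  ∑ i : Fin m, if w i then ((N : ℝ) + 1) / (2 * N) * cantorRatio N ^ (i : ℕ) else 0

lemma N_pos {N : ℕ} (hN : 3 ≤ N) : (0:ℝ) < N := by
  have : (3:ℝ) ≤ N := by exact_mod_cast hN
  linarith

lemma r_pos {N : ℕ} (hN : 3 ≤ N) : 0 < cantorRatio N := by
  have h : (3:ℝ) ≤ N := by exact_mod_cast hN
  have h0 : (0:ℝ) < N := by linarith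
  unfold cantorRatio
  apply div_pos <;> linarith

lemma r_lt_one {N : ℕ} (hN : 3 ≤ N) : cantorRatio N < 1 := by
  have h : (3:ℝ) ≤ N := by exact_mod_cast hN
  unfold cantorRatio
  rw [div_lt_one (by linarith)]
  linarith

lemma b_eq {N : ℕ} (hN : 3 ≤ N) :
    ((N : ℝ) + 1) / (2 * N) = cantorRatio N + 1 / N := by
  have h : (3:ℝ) ≤ N := by exact_mod_cast hN
  unfold cantorRatio
  field_simp
  ring

lemma r_add_b {N : ℕ} (hN : 3 ≤ N) :
    cantorRatio N + ((N : ℝ) + 1) / (2 * N) = 1 := by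
  have h : (3:ℝ) ≤ N := by exact_mod_cast hN
  unfold cantorRatio
  field_simp
  ring

lemma b_pos {N : ℕ} (hN : 3 ≤ N) : 0 < ((N : ℝ) + 1) / (2 * N) := by
  have h : (3:ℝ) ≤ N := by exact_mod_cast hN
  positivity

lemma r_lt_b {N : ℕ} (hN : 3 ≤ N) : cantorRatio N < ((N : ℝ) + 1) / (2 * N) := by
  have h : (3:ℝ) ≤ N := by exact_mod_cast hN
  rw [b_eq hN]
  have : (0:ℝ) < 1 / N := by positivity
  linarith

lemma wpt_zero (N : ℕ) (w : Fin 0 → Bool) : wpt N w = 0 := by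
  unfold wpt
  rw [Finset.univ_eq_empty, Finset.sum_empty]

lemma wpt_cons (N : ℕ) {m : ℕ} (ε : Bool) (v : Fin m → Bool) :
    wpt N (Fin.cons ε v) =
      (if ε then ((N : ℝ) + 1) / (2 * N) else 0) + cantorRatio N * wpt N v := by
  unfold wpt
  rw [Fin.sum_univ_succ, Finset.mul_sum]
  simp only [Fin.cons_zero, Fin.cons_succ, Fin.val_succ]
  congr 1
  · cases ε <;> simp
  · refine Finset.sum_congr rfl fun i _ => ?_
    cases v i <;> simp [pow_succ] <;> ring

lemma wpt_snoc (N : ℕ) {m : ℕ} (w : Fin m → Bool) (ε : Bool) :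
    wpt N (Fin.snoc w ε) =
      wpt N w + (if ε then ((N : ℝ) + 1) / (2 * N) * cantorRatio N ^ m else 0) := by
  unfold wpt
  rw [Fin.sum_univ_castSucc]
  simp only [Fin.snoc_castSucc, Fin.snoc_last, Fin.coe_castSucc, Fin.val_last]

lemma wpt_nonneg {N : ℕ} (hN : 3 ≤ N) {m : ℕ} (w : Fin m → Bool) : 0 ≤ wpt N w := by
  refine Finset.sum_nonneg fun i _ => ?_
  have h1 := b_pos hN
  have h2 := r_pos hN
  split
  · positivity
  · exact le_rfl

lemma wpt_add_pow_le_one {N : ℕ} (hN : 3 ≤ N) : ∀ {m : ℕ} (w : Fin m → Bool),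
    wpt N w + cantorRatio N ^ m ≤ 1 := by
  intro m
  induction m with
  | zero => intro w; simp [wpt_zero]
  | succ m ih =>
    intro w
    rw [← Fin.cons_self_tail w, wpt_cons]
    have h1 := ih (Fin.tail w)
    have h2 := r_pos hN
    have h3 := r_add_b hN
    have h4 := wpt_nonneg hN (Fin.tail w)
    have h5 := r_lt_one hN
    have h6 : cantorRatio N * (wpt N (Fin.tail w) + cantorRatio N ^ m) ≤ cantorRatio N * 1 :=
      mul_le_mul_of_nonneg_left h1 h2.le
    rw [pow_succ]
    cases w 0 <;> simp only [Bool.false_eq_true, if_true, if_false, ite_self] <;> nlinarith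

end Stmt4Aux
namespace Stmt4Aux

lemma iUnion_cons {m : ℕ} (f : (Fin (m+1) → Bool) → Set ℝ) :
    (⋃ w : Fin (m+1) → Bool, f w) =
      (⋃ v : Fin m → Bool, f (Fin.cons false v)) ∪ ⋃ v : Fin m → Bool, f (Fin.cons true v) := by
  ext x
  simp only [Set.mem_iUnion, Set.mem_union]
  constructor
  · rintro ⟨w, hw⟩
    rw [← Fin.cons_self_tail w] at hw
    cases h0 : w 0
    · exact Or.inl ⟨Fin.tail w, by rwa [h0] at hw⟩
    · exact Or.inr ⟨Fin.tail w, by rwa [h0] at hw⟩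
  · rintro (⟨v, hv⟩ | ⟨v, hv⟩)
    exacts [⟨Fin.cons false v, hv⟩, ⟨Fin.cons true v, hv⟩]

lemma image_affine_Icc {r c u v : ℝ} (hr : 0 < r) :
    (fun x => r * x + c) '' Icc u v = Icc (r * u + c) (r * v + c) := by
  ext x
  simp only [Set.mem_image, Set.mem_Icc]
  constructor
  · rintro ⟨y, ⟨h1, h2⟩, rfl⟩
    constructor <;> nlinarith
  · rintro ⟨h1, h2⟩
    refine ⟨(x - c) / r, ⟨?_, ?_⟩, ?_⟩
    · rw [le_div_iff₀ hr]; nlinarith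
    · rw [div_le_iff₀ hr]; nlinarith
    · field_simp; ring

lemma stage_eq {N : ℕ} (hN : 3 ≤ N) : ∀ m : ℕ,
    cantorStage N m = ⋃ w : Fin m → Bool, Icc (wpt N w) (wpt N w + cantorRatio N ^ m) := by
  intro m
  induction m with
  | zero =>
    ext x
    simp only [cantorStage, Set.mem_iUnion]
    constructor
    · intro h; exact ⟨Fin.elim0, by simpa [wpt_zero]⟩
    · rintro ⟨w, hw⟩; simpa [wpt_zero] using hw
  | succ m ih =>
    show _ ∪ _ = _
    rw [ih, Set.image_iUnion, Set.image_iUnion, iUnion_cons]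
    have hr := r_pos hN
    congr 1
    · refine Set.iUnion_congr fun v => ?_
      have hf : (fun x => cantorRatio N * x) = fun x => cantorRatio N * x + 0 := by
        funext x; ring
      rw [hf, image_affine_Icc hr, wpt_cons]
      simp only [Bool.false_eq_true, if_false, zero_add]
      rw [show cantorRatio N * wpt N v + 0 = cantorRatio N * wpt N v from by ring,
        show cantorRatio N * (wpt N v + cantorRatio N ^ m) + 0 =
          cantorRatio N * wpt N v + cantorRatio N ^ (m+1) from by ring]
    · refine Set.iUnion_congr fun v => ?_
      rw [image_affine_Icc hr, wpt_cons]
      simp only [if_true]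
      rw [show cantorRatio N * wpt N v + ((N:ℝ)+1)/(2*N) =
            ((N:ℝ)+1)/(2*N) + cantorRatio N * wpt N v from by ring,
        show cantorRatio N * (wpt N v + cantorRatio N ^ m) + ((N:ℝ)+1)/(2*N) =
          ((N:ℝ)+1)/(2*N) + cantorRatio N * wpt N v + cantorRatio N ^ (m+1) from by ring]

/-- separation: distinct stage-(m+1) intervals are at distance ≥ r^m / N -/
lemma sep {N : ℕ} (hN : 3 ≤ N) : ∀ m : ℕ, ∀ w w' : Fin (m+1) → Bool, w ≠ w' →
    wpt N w + cantorRatio N ^ (m+1) + cantorRatio N ^ m * (1 / N) ≤ wpt N w' ∨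
    wpt N w' + cantorRatio N ^ (m+1) + cantorRatio N ^ m * (1 / N) ≤ wpt N w := by
  have hr := r_pos hN
  have hr1 := r_lt_one hN
  have hb := r_add_b hN
  have hbe := b_eq hN
  have hNp := N_pos hN
  intro m
  induction m with
  | zero =>
    intro w w' hne
    have h01 : w 0 ≠ w' 0 := fun h => hne (funext fun i => by rw [Fin.eq_zero i]; exact h)
    have hw : ∀ u : Fin 1 → Bool, wpt N u = if u 0 then ((N:ℝ)+1)/(2*N) else 0 := by
      intro u; unfold wpt; rw [Fin.sum_univ_one]; cases u 0 <;> simp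
    rw [hw w, hw w']
    simp only [pow_one, pow_zero, one_mul]
    cases h : w 0
    · have h' : w' 0 = true := by
        cases h2 : w' 0
        · exact absurd (h.trans h2.symm) h01
        · rfl
      left
      rw [h']
      simp only [Bool.false_eq_true, if_false, if_true, zero_add]
      rw [hbe]
      linarith
    · have h' : w' 0 = false := by
        cases h2 : w' 0
        · rfl
        · exact absurd (h.trans h2.symm) h01
      right
      rw [h']
      simp only [Bool.false_eq_true, if_false, if_true, zero_add]
      rw [hbe]
      linarith
  | succ m ih =>
    intro w w' hne
    rw [← Fin.cons_self_tail w, ← Fin.cons_self_tail w', wpt_cons, wpt_cons]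
    by_cases h0 : w 0 = w' 0
    · have htl : Fin.tail w ≠ Fin.tail w' := by
        intro h
        apply hne
        rw [← Fin.cons_self_tail w, ← Fin.cons_self_tail w', h0, h]
      rcases ih (Fin.tail w) (Fin.tail w') htl with hc | hc
      · left
        rw [h0]
        have := mul_le_mul_of_nonneg_left hc hr.le
        have e1 : cantorRatio N * (wpt N (Fin.tail w) + cantorRatio N ^ (m+1)
            + cantorRatio N ^ m * (1 / N)) =
            cantorRatio N * wpt N (Fin.tail w) + cantorRatio N ^ (m+2)
            + cantorRatio N ^ (m+1) * (1 / N) := by ring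
        rw [e1] at this
        linarith
      · right
        rw [h0]
        have := mul_le_mul_of_nonneg_left hc hr.le
        have e1 : cantorRatio N * (wpt N (Fin.tail w') + cantorRatio N ^ (m+1)
            + cantorRatio N ^ m * (1 / N)) =
            cantorRatio N * wpt N (Fin.tail w') + cantorRatio N ^ (m+2)
            + cantorRatio N ^ (m+1) * (1 / N) := by ring
        rw [e1] at this
        linarith
    · have key : ∀ u u' : Fin (m+2) → Bool, u 0 = false → u' 0 = true →
          (if u 0 then ((N:ℝ)+1)/(2*N) else 0) + cantorRatio N * wpt N (Fin.tail u)
            + cantorRatio N ^ (m+2) + cantorRatio N ^ (m+1) * (1 / N) ≤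
          (if u' 0 then ((N:ℝ)+1)/(2*N) else 0) + cantorRatio N * wpt N (Fin.tail u') := by
        intro u u' hu hu'
        rw [hu, hu']
        simp only [Bool.false_eq_true, if_false, if_true, zero_add]
        have h1 := wpt_add_pow_le_one hN (Fin.tail u)
        have h2 := wpt_nonneg hN (Fin.tail u')
        have h3 : cantorRatio N * (wpt N (Fin.tail u) + cantorRatio N ^ (m+1)) ≤
            cantorRatio N * 1 := mul_le_mul_of_nonneg_left h1 hr.le
        have h4 : cantorRatio N ^ (m+1) * (1/(N:ℝ)) ≤ 1 * (1/N) := by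
          apply mul_le_mul_of_nonneg_right _ (by positivity)
          exact pow_le_one₀ hr.le hr1.le
        have h5 : cantorRatio N * wpt N (Fin.tail u') ≥ 0 := by positivity
        rw [hbe, pow_succ]
        linarith
      cases h : w 0
      · left
        have h' : w' 0 = true := by
          cases h2 : w' 0
          · exact absurd (h.trans h2.symm) h0
          · rfl
        have := key w w' h h'
        rw [h, h'] at this
        rw [h']
        exact this
      · right
        have h' : w' 0 = false := by
          cases h2 : w' 0
          · rfl
          · exact absurd (h.trans h2.symm) h0
        have := key w' w h' h
        rw [h, h'] at this
        rw [h']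
        exact this

end Stmt4Aux
namespace Stmt4Aux

/-- the stage-(m+1) interval of `w` is inside the stage-m interval of `Fin.init w` -/
lemma nested_init {N : ℕ} (hN : 3 ≤ N) {m : ℕ} (w : Fin (m+1) → Bool) :
    Icc (wpt N w) (wpt N w + cantorRatio N ^ (m+1)) ⊆
      Icc (wpt N (Fin.init w)) (wpt N (Fin.init w) + cantorRatio N ^ m) := by
  have hr := r_pos hN
  have hb := r_add_b hN
  have hbp := b_pos hN
  have hw : wpt N w = wpt N (Fin.init w) +
      (if w (Fin.last m) then ((N:ℝ)+1)/(2*N) * cantorRatio N ^ m else 0) := by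
    conv_lhs => rw [← Fin.snoc_init_self w]
    rw [wpt_snoc]
  apply Set.Icc_subset_Icc
  · rw [hw]
    have : (0:ℝ) ≤ if w (Fin.last m) then ((N:ℝ)+1)/(2*N) * cantorRatio N ^ m else 0 := by
      split
      · positivity
      · exact le_rfl
    linarith
  · rw [hw, pow_succ]
    have : (if w (Fin.last m) then ((N:ℝ)+1)/(2*N) * cantorRatio N ^ m else 0) ≤
        ((N:ℝ)+1)/(2*N) * cantorRatio N ^ m := by
      split
      · exact le_rfl
      · positivity
    nlinarith [pow_pos hr m]

lemma nested_castLE {N : ℕ} (hN : 3 ≤ N) {p : ℕ} :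
    ∀ m : ℕ, ∀ h : p ≤ m, ∀ w : Fin m → Bool,
    Icc (wpt N w) (wpt N w + cantorRatio N ^ m) ⊆
      Icc (wpt N (w ∘ Fin.castLE h)) (wpt N (w ∘ Fin.castLE h) + cantorRatio N ^ p) := by
  refine Nat.le_induction ?_ ?_
  · intro w
    have : w ∘ Fin.castLE (le_refl p) = w := by
      funext i; congr 1
    rw [this]
  · intro m hm ih w
    have h1 := nested_init hN w
    have h2 := ih (Fin.init w)
    have h3 : Fin.init w ∘ Fin.castLE hm = w ∘ Fin.castLE (Nat.le_succ_of_le hm) := by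
      funext i
      show w _ = w _
      congr 1
    rw [h3] at h2
    exact h1.trans h2

/-- distinct stage-m intervals are disjoint -/
lemma icc_disjoint {N : ℕ} (hN : 3 ≤ N) {m : ℕ} (w w' : Fin m → Bool) (hne : w ≠ w') :
    Icc (wpt N w) (wpt N w + cantorRatio N ^ m) ∩
      Icc (wpt N w') (wpt N w' + cantorRatio N ^ m) = ∅ := by
  cases m with
  | zero => exact absurd (Subsingleton.elim w w') hne
  | succ m =>
    have hg : 0 < cantorRatio N ^ m * (1 / (N:ℝ)) := by
      have := r_pos hN
      have := N_pos hN
      positivity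
    ext x
    simp only [Set.mem_inter_iff, Set.mem_Icc, Set.mem_empty_iff_false, iff_false]
    rintro ⟨⟨h1, h2⟩, h3, h4⟩
    rcases sep hN m w w' hne with hc | hc <;> linarith

/-- the middle removed part of the interval of w -/
noncomputable def mid (N : ℕ) {m : ℕ} (w : Fin m → Bool) : Set ℝ :=
  Ioo (wpt N w + cantorRatio N ^ (m+1)) (wpt N w + ((N:ℝ)+1)/(2*N) * cantorRatio N ^ m)

lemma diff_subset_mid {N : ℕ} (hN : 3 ≤ N) {m : ℕ} (w : Fin m → Bool) :
    Icc (wpt N w) (wpt N w + cantorRatio N ^ m) \ cantorStage N (m+1) ⊆ mid N w := by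
  have hb := r_add_b hN
  have e : ((N:ℝ)+1)/(2*N) * cantorRatio N ^ m + cantorRatio N ^ (m+1) = cantorRatio N ^ m := by
    rw [pow_succ]
    linear_combination (cantorRatio N ^ m) * hb
  rintro x ⟨hx1, hx2⟩
  rw [Set.mem_Icc] at hx1
  rw [stage_eq hN] at hx2
  simp only [Set.mem_iUnion, not_exists] at hx2
  have hfalse := hx2 (Fin.snoc w false)
  have htrue := hx2 (Fin.snoc w true)
  rw [wpt_snoc] at hfalse htrue
  simp only [Bool.false_eq_true, if_false, if_true, add_zero] at hfalse htrue
  rw [Set.mem_Icc, not_and_or, not_le, not_le] at hfalse htrue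
  refine ⟨?_, ?_⟩
  · rcases hfalse with h | h <;> linarith [hx1.1]
  · rcases htrue with h | h <;> linarith [hx1.2]

end Stmt4Aux
namespace Stmt4Aux

lemma mid_subset_icc {N : ℕ} (hN : 3 ≤ N) {m : ℕ} (w : Fin m → Bool) :
    mid N w ⊆ Icc (wpt N w) (wpt N w + cantorRatio N ^ m) := by
  have hr := r_pos hN
  have hb := r_add_b hN
  have hbp := b_pos hN
  have hrb := r_lt_b hN
  intro x hx
  rw [mid, Set.mem_Ioo] at hx
  constructor
  · nlinarith [pow_pos hr (m+1)]
  · nlinarith [pow_pos hr m, hx.2]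

lemma mid_disjoint_stage {N : ℕ} (hN : 3 ≤ N) {m : ℕ} (w : Fin m → Bool) :
    mid N w ∩ cantorStage N (m+1) = ∅ := by
  have hb := r_add_b hN
  have e : ((N:ℝ)+1)/(2*N) * cantorRatio N ^ m + cantorRatio N ^ (m+1) = cantorRatio N ^ m := by
    rw [pow_succ]
    linear_combination (cantorRatio N ^ m) * hb
  ext x
  simp only [Set.mem_inter_iff, Set.mem_empty_iff_false, iff_false, not_and]
  intro hx1 hx2
  rw [stage_eq hN] at hx2
  simp only [Set.mem_iUnion] at hx2
  obtain ⟨u, hu⟩ := hx2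
  have hui := nested_init hN u hu
  by_cases hiu : Fin.init u = w
  · rw [← Fin.snoc_init_self u, hiu] at hu
    rw [wpt_snoc] at hu
    rw [mid, Set.mem_Ioo] at hx1
    rw [Set.mem_Icc] at hu
    cases hlast : u (Fin.last m) <;> rw [hlast] at hu <;>
      simp only [Bool.false_eq_true, if_false, if_true, add_zero] at hu <;>
      [linarith [hx1.1, hu.2]; linarith [hx1.2, hu.1]]
  · have hxw : x ∈ Icc (wpt N w) (wpt N w + cantorRatio N ^ m) := mid_subset_icc hN w hx1
    have := icc_disjoint hN (Fin.init u) w hiu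
    have : x ∈ (∅ : Set ℝ) := this ▸ ⟨hui, hxw⟩
    exact this

lemma mid_nonempty {N : ℕ} (hN : 3 ≤ N) {m : ℕ} (w : Fin m → Bool) :
    (mid N w).Nonempty := by
  rw [mid]
  rw [Set.nonempty_Ioo]
  have hr := r_pos hN
  have hrb := r_lt_b hN
  rw [pow_succ]
  have := pow_pos hr m
  nlinarith

/-- a connected open interval inside stage m that meets the interval of w is inside it -/
lemma subset_of_mem {N : ℕ} (hN : 3 ≤ N) {m : ℕ} {S : Set ℝ} {pp qq : ℝ}
    (hS : S = Ioo pp qq)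
    (hsub : S ⊆ ⋃ u : Fin m → Bool, Icc (wpt N u) (wpt N u + cantorRatio N ^ m))
    {x : ℝ} (hx : x ∈ S) (w : Fin m → Bool)
    (hxw : x ∈ Icc (wpt N w) (wpt N w + cantorRatio N ^ m)) :
    S ⊆ Icc (wpt N w) (wpt N w + cantorRatio N ^ m) := by
  intro y hy
  obtain ⟨w', hy'⟩ := Set.mem_iUnion.mp (hsub hy)
  by_cases hww : w' = w
  · rwa [hww] at hy'
  -- w' ≠ w, so m = m'' + 1 and we can use sep to find a forbidden point between
  cases m with
  | zero => exact absurd (Subsingleton.elim w' w) hww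
  | succ m =>
    exfalso
    have hr := r_pos hN
    have hNp := N_pos hN
    have hgpos : 0 < cantorRatio N ^ m * (1 / (N:ℝ)) := by positivity
    rw [Set.mem_Icc] at hxw hy'
    set R := cantorRatio N ^ (m+1) with hR
    set g := cantorRatio N ^ m * (1 / (N:ℝ)) with hg
    have hz : ∀ z : ℝ, wpt N w + R < z → z < wpt N w + R + g → z ∉ S := by
      intro z hz1 hz2 hzS
      obtain ⟨u, hu⟩ := Set.mem_iUnion.mp (hsub hzS)
      rw [Set.mem_Icc] at hu
      by_cases huw : u = w
      · rw [huw] at hu; linarith [hu.2]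
      · rcases sep hN m u w huw with hc | hc
        · linarith [hu.2]
        · linarith [hu.1]
    rw [hS, Set.mem_Ioo] at hx hy
    rcases sep hN m w w' (fun h => hww h.symm) with hc | hc
    · -- w left of w' : take z between
      have hzS : (wpt N w + R + g/2) ∈ S := by
        rw [hS, Set.mem_Ioo]
        constructor
        · linarith [hxw.2, hx.1]
        · linarith [hy'.1, hy.2]
      exact hz _ (by linarith) (by linarith) hzS
    · -- w' left of w : take z on the other side
      have hzS2 : ∀ z : ℝ, wpt N w - g < z → z < wpt N w → z ∉ S := by
        intro z hz1 hz2 hzS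
        obtain ⟨u, hu⟩ := Set.mem_iUnion.mp (hsub hzS)
        rw [Set.mem_Icc] at hu
        by_cases huw : u = w
        · rw [huw] at hu; linarith [hu.1]
        · rcases sep hN m u w huw with hc2 | hc2
          · linarith [hu.1]
          · linarith [hu.2]
      have hzS : (wpt N w - g/2) ∈ S := by
        rw [hS, Set.mem_Ioo]
        constructor
        · linarith [hy'.2, hy.1]
        · linarith [hxw.1, hx.2]
      exact hzS2 _ (by linarith) (by linarith) hzS

end Stmt4Aux
namespace Stmt4Aux

/-- an interval of length at most the gap meets at most 2 stage-(p+1) intervals -/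
lemma qcount {N : ℕ} (hN : 3 ≤ N) {p : ℕ} {a L : ℝ}
    (hL : L ≤ cantorRatio N ^ p * (1 / N)) :
    Nat.card {v : Fin (p+1) → Bool //
      (Icc (wpt N v) (wpt N v + cantorRatio N ^ (p+1)) ∩ Icc a (a + L)).Nonempty} ≤ 2 := by
  classical
  have hr := r_pos hN
  have hNp := N_pos hN
  have hgpos : (0:ℝ) < cantorRatio N ^ p * (1 / N) := by positivity
  have hRpos : (0:ℝ) < cantorRatio N ^ (p+1) := pow_pos hr _
  rw [Nat.card_eq_fintype_card, Fintype.card_subtype]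
  by_contra hlt
  push_neg at hlt
  rw [Finset.two_lt_card] at hlt
  obtain ⟨v1, h1, v2, h2, v3, h3, h12, h13, h23⟩ := hlt
  rw [Finset.mem_filter] at h1 h2 h3
  obtain ⟨x1, hx1i, hx1j⟩ := h1.2
  obtain ⟨x2, hx2i, hx2j⟩ := h2.2
  obtain ⟨x3, hx3i, hx3j⟩ := h3.2
  rw [Set.mem_Icc] at hx1i hx1j hx2i hx2j hx3i hx3j
  rcases sep hN p v1 v2 h12 with s12 | s12 <;>
    rcases sep hN p v1 v3 h13 with s13 | s13 <;>
      rcases sep hN p v2 v3 h23 with s23 | s23 <;> linarith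

/-- counting words at level m whose interval meets J, via truncation to level p -/
lemma count_words {N : ℕ} (hN : 3 ≤ N) {m p : ℕ} (hp : p + 1 ≤ m) {a L : ℝ}
    (hL : L ≤ cantorRatio N ^ p * (1 / N)) :
    Nat.card {w : Fin m → Bool //
      (Icc (wpt N w) (wpt N w + cantorRatio N ^ m) ∩ Icc a (a + L)).Nonempty} ≤
      2 * 2 ^ (m - (p+1)) := by
  classical
  set P : (Fin m → Bool) → Prop := fun w =>
    (Icc (wpt N w) (wpt N w + cantorRatio N ^ m) ∩ Icc a (a + L)).Nonempty with hP
  set Q : (Fin (p+1) → Bool) → Prop := fun v =>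
    (Icc (wpt N v) (wpt N v + cantorRatio N ^ (p+1)) ∩ Icc a (a + L)).Nonempty with hQ
  have hQw : ∀ w : Fin m → Bool, P w → Q (w ∘ Fin.castLE hp) := by
    intro w ⟨x, hx1, hx2⟩
    exact ⟨x, nested_castLE hN m hp w hx1, hx2⟩
  let F : {w : Fin m → Bool // P w} → {v : Fin (p+1) → Bool // Q v} × (Fin (m - (p+1)) → Bool) :=
    fun w => ⟨⟨w.1 ∘ Fin.castLE hp, hQw w.1 w.2⟩,
      fun i => w.1 ⟨p + 1 + i.1, by omega⟩⟩
  have hF : Function.Injective F := by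
    rintro ⟨w, hw⟩ ⟨w', hw'⟩ hFe
    have hfst := congrArg (fun z => z.1.1) hFe
    have hsnd := congrArg (fun z => z.2) hFe
    simp only [F] at hfst hsnd
    ext1
    funext i
    by_cases hi : i.1 < p + 1
    · have := congrFun hfst ⟨i.1, hi⟩
      simpa [Fin.castLE] using this
    · have := congrFun hsnd ⟨i.1 - (p+1), by omega⟩
      simp only at this
      have e : (⟨p + 1 + (i.1 - (p+1)), by omega⟩ : Fin m) = i := by
        apply Fin.ext
        simp
        omega
      rwa [e] at this
  calc Nat.card {w : Fin m → Bool // P w} ≤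
      Nat.card ({v : Fin (p+1) → Bool // Q v} × (Fin (m - (p+1)) → Bool)) :=
        Nat.card_le_card_of_injective F hF
    _ = Nat.card {v : Fin (p+1) → Bool // Q v} * 2 ^ (m - (p+1)) := by
        rw [Nat.card_prod]
        congr 1
        rw [Nat.card_eq_fintype_card, Fintype.card_fun]
        simp
    _ ≤ 2 * 2 ^ (m - (p+1)) := by
        have := qcount hN (a := a) hL
        exact Nat.mul_le_mul_right _ this

end Stmt4Aux
namespace Stmt4Aux

lemma t_gt_one {N : ℕ} (hN : 3 ≤ N) : 1 < 2 * (N:ℝ) / ((N:ℝ) - 1) := by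
  have h : (3:ℝ) ≤ N := by exact_mod_cast hN
  rw [lt_div_iff₀ (by linarith)]
  linarith

lemma rt_one {N : ℕ} (hN : 3 ≤ N) : cantorRatio N * (2 * (N:ℝ) / ((N:ℝ) - 1)) = 1 := by
  have h : (3:ℝ) ≤ N := by exact_mod_cast hN
  unfold cantorRatio
  field_simp
  exact div_self (by linarith)

lemma finish {N : ℕ} (hN : 3 ≤ N) {δ : ℝ} (hδ : 0 < δ) (c q : ℕ)
    (hc : c ≤ 2 * 2 ^ q)
    (h2 : (2 * (N:ℝ) / ((N:ℝ) - 1)) ^ q ≤ (⌈1/δ⌉₊ : ℝ)) :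
    (c : ℝ) ≤ 3 * (2:ℝ) ^ Real.logb (2 * N / (N - 1)) (⌈1 / δ⌉₊ : ℝ) := by
  have ht1 := t_gt_one hN
  have ht0 : (0:ℝ) < 2 * (N:ℝ) / ((N:ℝ) - 1) := by linarith
  have hM1 : (1:ℝ) ≤ (⌈1/δ⌉₊ : ℝ) := by
    have : 1 ≤ ⌈1/δ⌉₊ := Nat.one_le_ceil_iff.mpr (by positivity)
    exact_mod_cast this
  have hq : ((q:ℕ):ℝ) ≤ Real.logb (2 * N / (N - 1)) (⌈1 / δ⌉₊ : ℝ) := by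
    have hlog := (Real.logb_le_logb ht1 (pow_pos ht0 q) (by linarith)).mpr h2
    rwa [← Real.rpow_natCast (2 * (N:ℝ) / ((N:ℝ) - 1)) q,
      Real.logb_rpow ht0 (ne_of_gt ht1)] at hlog
  have h2q : (2:ℝ) ^ ((q:ℕ):ℝ) ≤
      (2:ℝ) ^ Real.logb (2 * N / (N - 1)) (⌈1 / δ⌉₊ : ℝ) :=
    (Real.rpow_le_rpow_left_iff (by norm_num)).mpr hq
  rw [Real.rpow_natCast] at h2q
  have hcast : (c:ℝ) ≤ 2 * (2:ℝ) ^ q := by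
    calc (c:ℝ) ≤ ((2 * 2 ^ q : ℕ) : ℝ) := by exact_mod_cast hc
      _ = 2 * (2:ℝ) ^ q := by push_cast; ring
  have hpos : (0:ℝ) ≤ (2:ℝ) ^ q := by positivity
  calc (c:ℝ) ≤ 2 * (2:ℝ) ^ q := hcast
    _ ≤ 3 * (2:ℝ) ^ q := by linarith
    _ ≤ 3 * (2:ℝ) ^ Real.logb (2 * N / (N - 1)) (⌈1 / δ⌉₊ : ℝ) := by linarith

end Stmt4Aux

open Stmt4Aux

theorem stmt4 (N : ℕ) (hN : 3 ≤ N) (k : ℕ) (δ : ℝ) (hδ : 0 < δ)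
    (j : ℕ) (hj : 1 ≤ j) (hlen : 1 / N * cantorRatio N ^ (j - 1) = δ / N ^ k)
    (n : ℕ) (I : Fin n → Set ℝ)
    (hopen : ∀ i, ∃ p q : ℝ, p < q ∧ I i = Set.Ioo p q)
    (hdisj : Pairwise (Function.onFun Disjoint I))
    (hrem : (⋃ i, I i) = cantorStage N (j - 1) \ cantorStage N j)
    (a : ℝ) :
    (Nat.card {i : Fin n // (I i ∩ Set.Icc a (a + 1 / N ^ k)).Nonempty} : ℝ) ≤
      3 * (2 : ℝ) ^ Real.logb (2 * N / (N - 1)) (⌈1 / δ⌉₊ : ℝ) := by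
  classical
  obtain ⟨m, rfl⟩ : ∃ m, j = m + 1 := ⟨j - 1, (Nat.succ_pred_eq_of_pos hj).symm⟩
  simp only [Nat.add_sub_cancel] at hlen hrem ⊢
  have hNR : (3:ℝ) ≤ (N:ℝ) := by exact_mod_cast hN
  have hNp : (0:ℝ) < N := by linarith
  have hr := r_pos hN
  have hrm : (0:ℝ) < cantorRatio N ^ m := pow_pos hr m
  set t : ℝ := 2 * (N:ℝ) / ((N:ℝ) - 1) with htdef
  have hrt : cantorRatio N * t = 1 := rt_one hN
  have ht0 : (0:ℝ) < t := by have := t_gt_one hN; linarith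
  set L : ℝ := 1 / (N:ℝ) ^ k with hLdef
  have hE : cantorRatio N ^ m * (N:ℝ) ^ k = δ * N := by
    have h := hlen
    have hNk : (0:ℝ) < (N:ℝ)^k := by positivity
    field_simp at h
    linarith
  -- basic facts about the I l
  have hIopen : ∀ l, IsOpen (I l) := fun l => by
    obtain ⟨p', q', _, h⟩ := hopen l; rw [h]; exact isOpen_Ioo
  have hINE : ∀ l, (I l).Nonempty := fun l => by
    obtain ⟨p', q', hpq, h⟩ := hopen l; rw [h]; exact Set.nonempty_Ioo.mpr hpq
  have hremS : ∀ l, I l ⊆ ⋃ w : Fin m → Bool,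
      Icc (wpt N w) (wpt N w + cantorRatio N ^ m) := by
    intro l x hx
    rw [← stage_eq hN]
    have hxU : x ∈ ⋃ i, I i := Set.mem_iUnion.mpr ⟨l, hx⟩
    rw [hrem] at hxU
    exact hxU.1
  have hnotstage : ∀ l, ∀ x ∈ I l, x ∉ cantorStage N (m+1) := by
    intro l x hx
    have hxU : x ∈ ⋃ i, I i := Set.mem_iUnion.mpr ⟨l, hx⟩
    rw [hrem] at hxU
    exact hxU.2
  have hmid : ∀ l (w : Fin m → Bool),
      I l ⊆ Icc (wpt N w) (wpt N w + cantorRatio N ^ m) → I l ⊆ mid N w := by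
    intro l w hlw x hx
    exact diff_subset_mid hN w ⟨hlw hx, hnotstage l x hx⟩
  have hinj : ∀ i i' : Fin n, ∀ w : Fin m → Bool,
      I i ⊆ Icc (wpt N w) (wpt N w + cantorRatio N ^ m) →
      I i' ⊆ Icc (wpt N w) (wpt N w + cantorRatio N ^ m) → i = i' := by
    intro i i' w hi hi'
    by_contra hne
    have hpc : IsPreconnected (mid N w) := by rw [mid]; exact isPreconnected_Ioo
    have hV : IsOpen (⋃ l, ⋃ _ : l ≠ i, I l) :=
      isOpen_iUnion fun l => isOpen_iUnion fun _ => hIopen l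
    have hcover : mid N w ⊆ I i ∪ ⋃ l, ⋃ _ : l ≠ i, I l := by
      intro x hx
      have hx1 : x ∈ cantorStage N m \ cantorStage N (m+1) := by
        constructor
        · rw [stage_eq hN]
          exact Set.mem_iUnion.mpr ⟨w, mid_subset_icc hN w hx⟩
        · intro hx2
          exact absurd (show x ∈ (∅ : Set ℝ) from (mid_disjoint_stage hN w) ▸ (⟨hx, hx2⟩ :
            x ∈ mid N w ∩ cantorStage N (m+1))) (Set.notMem_empty x)
      rw [← hrem] at hx1
      obtain ⟨l, hl⟩ := Set.mem_iUnion.mp hx1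
      by_cases hli : l = i
      · exact Or.inl (hli ▸ hl)
      · exact Or.inr (Set.mem_iUnion.mpr ⟨l, Set.mem_iUnion.mpr ⟨hli, hl⟩⟩)
    obtain ⟨y, hy⟩ := hINE i
    obtain ⟨y', hy'⟩ := hINE i'
    have hne' : i' ≠ i := fun h => hne h.symm
    obtain ⟨z, hz1, hz2, hz3⟩ := hpc (I i) _ (hIopen i) hV hcover
      ⟨y, hmid i w hi hy, hy⟩
      ⟨y', hmid i' w hi' hy', Set.mem_iUnion.mpr ⟨i', Set.mem_iUnion.mpr ⟨hne', hy'⟩⟩⟩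
    obtain ⟨l, hl⟩ := Set.mem_iUnion.mp hz3
    obtain ⟨hli, hzl⟩ := Set.mem_iUnion.mp hl
    exact (Set.disjoint_left.mp (hdisj hli) hzl) hz2
  -- step 1 : inject indices into words
  have hchoice : ∀ i : Fin n, (I i ∩ Icc a (a + L)).Nonempty →
      ∃ w : Fin m → Bool, I i ⊆ Icc (wpt N w) (wpt N w + cantorRatio N ^ m) ∧
        (Icc (wpt N w) (wpt N w + cantorRatio N ^ m) ∩ Icc a (a + L)).Nonempty := by
    rintro i ⟨x, hxI, hxJ⟩
    obtain ⟨w, hxw⟩ := Set.mem_iUnion.mp (hremS i hxI)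
    obtain ⟨p', q', hpq', hIi⟩ := hopen i
    exact ⟨w, subset_of_mem hN hIi (hremS i) hxI w hxw, ⟨x, hxw, hxJ⟩⟩
  have step1 : Nat.card {i : Fin n // (I i ∩ Icc a (a + L)).Nonempty} ≤
      Nat.card {w : Fin m → Bool //
        (Icc (wpt N w) (wpt N w + cantorRatio N ^ m) ∩ Icc a (a + L)).Nonempty} := by
    refine Nat.card_le_card_of_injective
      (fun i => ⟨(hchoice i.1 i.2).choose, (hchoice i.1 i.2).choose_spec.2⟩) ?_
    rintro ⟨i, hi⟩ ⟨i', hi'⟩ he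
    have hww : (hchoice i hi).choose = (hchoice i' hi').choose :=
      congrArg Subtype.val he
    have h1 := (hchoice i hi).choose_spec.1
    have h2 := (hchoice i' hi').choose_spec.1
    rw [← hww] at h2
    exact Subtype.ext (hinj i i' _ h1 h2)
  have hwords_le : Nat.card {w : Fin m → Bool //
      (Icc (wpt N w) (wpt N w + cantorRatio N ^ m) ∩ Icc a (a + L)).Nonempty} ≤ 2 ^ m := by
    have h1 := Nat.card_le_card_of_injective (Subtype.val
      (p := fun w : Fin m → Bool =>
        (Icc (wpt N w) (wpt N w + cantorRatio N ^ m) ∩ Icc a (a + L)).Nonempty))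
      Subtype.coe_injective
    have h2 : Nat.card (Fin m → Bool) = 2 ^ m := by
      rw [Nat.card_eq_fintype_card, Fintype.card_fun]
      simp
    omega
  rcases Nat.eq_zero_or_pos k with hk | hk
  · -- k = 0
    subst hk
    have hcount : Nat.card {i : Fin n // (I i ∩ Icc a (a + L)).Nonempty} ≤ 2 * 2 ^ m := by
      have := step1.trans hwords_le
      omega
    have hC2 : t ^ m ≤ (⌈1/δ⌉₊ : ℝ) := by
      have h1 : cantorRatio N ^ m = δ * N := by
        have := hE
        simpa using this
      have h2 : cantorRatio N ^ m * t ^ m = 1 := by rw [← mul_pow, hrt, one_pow]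
      have htm0 : (0:ℝ) < t ^ m := pow_pos ht0 m
      have h3 : t ^ m ≤ 1/δ := by
        rw [h1] at h2
        rw [le_div_iff₀ hδ]
        nlinarith
      exact h3.trans (Nat.le_ceil _)
    exact finish hN hδ _ m hcount hC2
  · obtain ⟨k', rfl⟩ : ∃ k', k = k' + 1 := ⟨k - 1, by omega⟩
    rcases Nat.eq_zero_or_pos m with hm0 | hm0
    · -- m = 0
      subst hm0
      have hcount : Nat.card {i : Fin n // (I i ∩ Icc a (a + L)).Nonempty} ≤ 2 * 2 ^ 0 := by
        have := step1.trans hwords_le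
        simpa using this.trans (by norm_num)
      have hC2 : t ^ 0 ≤ (⌈1/δ⌉₊ : ℝ) := by
        rw [pow_zero]
        have : 1 ≤ ⌈1/δ⌉₊ := Nat.one_le_ceil_iff.mpr (by positivity)
        exact_mod_cast this
      exact finish hN hδ _ 0 hcount hC2
    · -- m ≥ 1
      set p := Nat.findGreatest (fun q => 1 ≤ q ∧ t ^ (q-1) ≤ (N:ℝ)^k') m with hpdef
      have hP1 : 1 ≤ 1 ∧ t ^ (1-1) ≤ (N:ℝ)^k' := by
        refine ⟨le_rfl, ?_⟩
        simpa using one_le_pow₀ (by linarith : (1:ℝ) ≤ (N:ℝ))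
      have hp1 : 1 ≤ p := Nat.le_findGreatest hm0 hP1
      have hpm : p ≤ m := Nat.findGreatest_le m
      have hPp : 1 ≤ p ∧ t ^ (p-1) ≤ (N:ℝ)^k' := by
        have h := Nat.findGreatest_spec (P := fun q => 1 ≤ q ∧ t ^ (q-1) ≤ (N:ℝ)^k') hm0 hP1
        simp only [← hpdef] at h
        exact h
      obtain ⟨p', hp'⟩ : ∃ p', p = p' + 1 := ⟨p - 1, by omega⟩
      have hgap : L ≤ cantorRatio N ^ p' * (1 / N) := by
        have h1 : t ^ p' ≤ (N:ℝ)^k' := by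
          have := hPp.2
          rw [hp'] at this
          simpa using this
        have h2 : cantorRatio N ^ p' * t ^ p' = 1 := by rw [← mul_pow, hrt, one_pow]
        have hNk : (0:ℝ) < (N:ℝ)^k' := by positivity
        have h3 : 1 / (N:ℝ)^k' ≤ cantorRatio N ^ p' := by
          rw [div_le_iff₀ hNk]
          calc (1:ℝ) = cantorRatio N ^ p' * t ^ p' := h2.symm
            _ ≤ cantorRatio N ^ p' * (N:ℝ)^k' :=
              mul_le_mul_of_nonneg_left h1 (pow_nonneg hr.le p')
        rw [hLdef]
        calc 1 / (N:ℝ)^(k'+1) = (1 / (N:ℝ)^k') * (1/N) := by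
              rw [pow_succ]; field_simp
          _ ≤ cantorRatio N ^ p' * (1/N) :=
              mul_le_mul_of_nonneg_right h3 (by positivity)
      have hC1 : Nat.card {i : Fin n // (I i ∩ Icc a (a + L)).Nonempty} ≤
          2 * 2 ^ (m - p) := by
        have hc := count_words hN (show p' + 1 ≤ m by omega) hgap (a := a)
        rw [hp']
        exact step1.trans hc
      have hC2 : t ^ (m - p) ≤ (⌈1/δ⌉₊ : ℝ) := by
        rcases eq_or_lt_of_le hpm with he | hlt
        · rw [he, Nat.sub_self, pow_zero]
          have : 1 ≤ ⌈1/δ⌉₊ := Nat.one_le_ceil_iff.mpr (by positivity)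
          exact_mod_cast this
        · have hnP := Nat.findGreatest_is_greatest
            (show Nat.findGreatest (fun q => 1 ≤ q ∧ t ^ (q-1) ≤ (N:ℝ)^k') m < p + 1 by omega)
            (show p + 1 ≤ m by omega)
          have hNk'le : (N:ℝ)^k' ≤ t ^ p := by
            by_contra hcon
            push_neg at hcon
            exact hnP ⟨by omega, by simpa using hcon.le⟩
          have hδe : δ = cantorRatio N ^ m * (N:ℝ)^k' := by
            have h4 : cantorRatio N ^ m * ((N:ℝ)^k' * N) = δ * N := by
              rw [← pow_succ]
              exact hE
            have h5 : (cantorRatio N ^ m * (N:ℝ)^k') * N = δ * N := by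
              rw [← h4]; ring
            exact (mul_right_cancel₀ (ne_of_gt hNp) h5).symm
          have key : t ^ (m-p) * (N:ℝ)^k' ≤ t ^ m := by
            calc t^(m-p) * (N:ℝ)^k' ≤ t^(m-p) * t^p :=
                mul_le_mul_of_nonneg_left hNk'le (pow_nonneg ht0.le _)
              _ = t ^ m := by rw [← pow_add]; congr 1; omega
          have h1δ : t ^ (m-p) ≤ 1/δ := by
            rw [hδe, le_div_iff₀ (by positivity)]
            have h2 : cantorRatio N ^ m * t ^ m = 1 := by rw [← mul_pow, hrt, one_pow]
            calc t^(m-p) * (cantorRatio N ^ m * (N:ℝ)^k')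
                = (t^(m-p) * (N:ℝ)^k') * cantorRatio N ^ m := by ring
              _ ≤ t^m * cantorRatio N ^ m := mul_le_mul_of_nonneg_right key hrm.le
              _ = 1 := by rw [mul_comm]; exact h2
          exact h1δ.trans (Nat.le_ceil _)
      exact finish hN hδ _ (m - p) hC1 hC2
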